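/- The function y(t) = W( ((1−x_m) e^{(1−x_m)/x_m}) / (x_m e^{λ²(t−t_m)}) ) + λ²(t−t_m) + log( (x_m/(1−x_m)) · ((1−w₀)/w₀) ) − (1−x_m)/x_m, where W is the Lambert W function, solves the ODE y'(t) = λ² Φ⁻¹(y(t)) with y(t_m) = Φ(x_m), where Φ⁻¹(x) = w₀ e^x / (w₀ e^x + 1 − w₀). -/

import Mathlib

open Set Real Filter

/-- The auxiliary monotone extension of `x ↦ x * exp x`. -/
noncomputable def fext (x : ℝ) : ℝ := x * Real.exp (max x 0)

lemma fext_of_nonpos {x : ℝ} (hx : x ≤ 0) : fext x = x := by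
  simp [fext, max_eq_right hx]

lemma fext_of_nonneg {x : ℝ} (hx : 0 ≤ x) : fext x = x * Real.exp x := by
  simp [fext, max_eq_left hx]

lemma fext_strictMono : StrictMono fext := by
  intro a b hab
  rcases le_or_gt b 0 with hb | hb
  · rw [fext_of_nonpos (hab.le.trans hb), fext_of_nonpos hb]; exact hab
  · rw [fext_of_nonneg hb.le]
    rcases le_or_gt a 0 with ha | ha
    · rw [fext_of_nonpos ha]
      calc a ≤ 0 := ha
        _ < b * Real.exp b := mul_pos hb (Real.exp_pos b)
    · rw [fext_of_nonneg ha.le]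
      calc a * Real.exp a < b * Real.exp a := by
            exact mul_lt_mul_of_pos_right hab (Real.exp_pos a)
        _ < b * Real.exp b := by
            exact mul_lt_mul_of_pos_left (Real.exp_lt_exp.2 hab) hb

lemma fext_continuous : Continuous fext :=
  continuous_id.mul (Real.continuous_exp.comp (continuous_id.max continuous_const))

lemma fext_surjective : Function.Surjective fext := by
  apply fext_continuous.surjective
  · apply tendsto_atTop_mono (fun x => ?_) tendsto_id
    rcases le_or_gt x 0 with h | h
    · simp [fext_of_nonpos h]
    · rw [fext_of_nonneg h.le]
      have hx := mul_nonneg h.le (sub_nonneg.2 (Real.one_le_exp h.le))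
      simp only [id_eq]
      nlinarith
  · have heq : (id : ℝ → ℝ) =ᶠ[atBot] fext := by
      filter_upwards [eventually_le_atBot (0:ℝ)] with x hx
      exact (fext_of_nonpos hx).symm
    exact Filter.Tendsto.congr' heq tendsto_id

lemma lambert_inj {a b : ℝ} (ha : 0 < a) (hb : 0 < b)
    (h : a * Real.exp a = b * Real.exp b) : a = b := by
  apply fext_strictMono.injective
  rw [fext_of_nonneg ha.le, fext_of_nonneg hb.le]
  exact h

lemma lambert_hasDerivAt (W : ℝ → ℝ)
    (hW : ∀ z > (0 : ℝ), 0 < W z ∧ W z * Real.exp (W z) = z)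
    {z : ℝ} (hz : 0 < z) :
    HasDerivAt W ((Real.exp (W z) + W z * Real.exp (W z))⁻¹) z := by
  set e := StrictMono.orderIsoOfSurjective fext fext_strictMono fext_surjective with he
  have hWeq : ∀ x > (0:ℝ), W x = e.symm x := by
    intro x hx
    obtain ⟨hWpos, hWx⟩ := hW x hx
    have hfx : fext (W x) = x := by rw [fext_of_nonneg hWpos.le]; exact hWx
    have h2 := StrictMono.orderIsoOfSurjective_symm_apply_self fext
      fext_strictMono fext_surjective (W x)
    rw [hfx] at h2
    rw [he]
    exact h2.symm
  have hcont : ContinuousAt W z := by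
    have : ContinuousAt (e.symm : ℝ → ℝ) z := (e.toHomeomorph.symm.continuous).continuousAt
    apply this.congr
    filter_upwards [eventually_gt_nhds hz] with x hx
    exact (hWeq x hx).symm
  have hfg : ∀ᶠ x in nhds z, (fun u => u * Real.exp u) (W x) = x := by
    filter_upwards [eventually_gt_nhds hz] with x hx
    exact (hW x hx).2
  have hf : HasDerivAt (fun u => u * Real.exp u)
      (1 * Real.exp (W z) + W z * Real.exp (W z)) (W z) :=
    (hasDerivAt_id (W z)).mul (Real.hasDerivAt_exp (W z))
  rw [one_mul] at hf
  have hne : Real.exp (W z) + W z * Real.exp (W z) ≠ 0 := by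
    have := (hW z hz).1
    positivity
  exact HasDerivAt.of_local_left_inverse hcont hf hne hfg

/-- The explicit formula involving the (principal branch of the)
Lambert W function solves the SIS splitting ODE `y' = λ² Φ⁻¹(y)` with
`y(t_m) = Φ(x_m)`. -/
theorem sis_ode_explicit_solution
    (lam w₀ xm tm : ℝ) (hlam : 0 < lam)
    (hw₀ : w₀ ∈ Set.Ioo (0 : ℝ) 1) (hxm : xm ∈ Set.Ioo (0 : ℝ) 1)
    (W : ℝ → ℝ) (hW : ∀ z > (0 : ℝ), 0 < W z ∧ W z * Real.exp (W z) = z)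
    (Ψ Φ : ℝ → ℝ)
    (hΨ : ∀ u, Ψ u = w₀ * Real.exp u / (w₀ * Real.exp u + (1 - w₀)))
    (hΦ : ∀ x, Φ x = Real.log x - Real.log (1 - x) - Real.log w₀ + Real.log (1 - w₀))
    (y : ℝ → ℝ)
    (hy : ∀ t, y t =
      W ((1 - xm) * Real.exp ((1 - xm) / xm) / (xm * Real.exp (lam ^ 2 * (t - tm))))
        + lam ^ 2 * (t - tm)
        + Real.log ((xm / (1 - xm)) * ((1 - w₀) / w₀))
        - (1 - xm) / xm) :
    y tm = Φ xm ∧ ∀ t ≥ tm, HasDerivAt y (lam ^ 2 * Ψ (y t)) t := by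
  obtain ⟨hw0, hw1⟩ := hw₀
  obtain ⟨hx0, hx1⟩ := hxm
  have hx1' : 0 < 1 - xm := by linarith
  have hw1' : 0 < 1 - w₀ := by linarith
  have hxne : xm ≠ 0 := ne_of_gt hx0
  have hx1ne : (1 : ℝ) - xm ≠ 0 := ne_of_gt hx1'
  have hwne : w₀ ≠ 0 := ne_of_gt hw0
  have hw1ne : (1 : ℝ) - w₀ ≠ 0 := ne_of_gt hw1'
  set b := (1 - xm) / xm with hb
  have hbpos : 0 < b := div_pos hx1' hx0
  have argpos : 0 < (xm / (1 - xm)) * ((1 - w₀) / w₀) :=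
    mul_pos (div_pos hx0 hx1') (div_pos hw1' hw0)
  set g : ℝ → ℝ := fun t =>
    (1 - xm) * Real.exp ((1 - xm) / xm) / (xm * Real.exp (lam ^ 2 * (t - tm))) with hg
  have hgpos : ∀ t, 0 < g t := fun t =>
    div_pos (mul_pos hx1' (Real.exp_pos _)) (mul_pos hx0 (Real.exp_pos _))
  constructor
  · -- initial condition
    have hgtm : g tm = b * Real.exp b := by
      simp only [hg, hb]
      rw [sub_self, mul_zero, Real.exp_zero, mul_one]
      field_simp
    obtain ⟨hWp, hWe⟩ := hW (g tm) (hgpos tm)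
    have hWtm : W (g tm) = b := by
      apply lambert_inj hWp hbpos
      rw [hWe, hgtm]
    rw [hy tm, hΦ xm]
    rw [show g tm = (1 - xm) * Real.exp ((1 - xm) / xm) /
        (xm * Real.exp (lam ^ 2 * (tm - tm))) from rfl] at hWtm
    rw [hWtm]
    rw [sub_self, mul_zero]
    rw [Real.log_mul (ne_of_gt (div_pos hx0 hx1')) (ne_of_gt (div_pos hw1' hw0)),
      Real.log_div hxne hx1ne, Real.log_div hw1ne hwne]
    ring
  · -- derivative
    intro t _
    obtain ⟨hWp, hWe⟩ := hW (g t) (hgpos t)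
    set w := W (g t) with hwdef
    set s := lam ^ 2 * (t - tm) with hs
    -- derivative of the exponent function
    have hinner : HasDerivAt (fun t => lam ^ 2 * (t - tm)) (lam ^ 2) t := by
      simpa using ((hasDerivAt_id t).sub_const tm).const_mul (lam ^ 2)
    have hdenne : xm * Real.exp s ≠ 0 :=
      ne_of_gt (mul_pos hx0 (Real.exp_pos _))
    have hgderiv : HasDerivAt g (-(lam ^ 2) * g t) t := by
      have hden : HasDerivAt (fun t => xm * Real.exp (lam ^ 2 * (t - tm)))
          (xm * (Real.exp s * lam ^ 2)) t := (hinner.exp).const_mul xm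
      have := (hasDerivAt_const t ((1 - xm) * Real.exp ((1 - xm) / xm))).div hden hdenne
      refine HasDerivAt.congr_deriv this ?_
      simp only [hg]
      rw [zero_mul]
      field_simp
      ring
    have hWd := lambert_hasDerivAt W hW (hgpos t)
    have hcomp : HasDerivAt (fun t => W (g t))
        ((Real.exp w + w * Real.exp w)⁻¹ * (-(lam ^ 2) * g t)) t :=
      HasDerivAt.comp t hWd hgderiv
    have hF : HasDerivAt y
        ((Real.exp w + w * Real.exp w)⁻¹ * (-(lam ^ 2) * g t) + lam ^ 2) t := by
      have hyF : y = fun t =>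
          W ((1 - xm) * Real.exp ((1 - xm) / xm) / (xm * Real.exp (lam ^ 2 * (t - tm))))
            + lam ^ 2 * (t - tm)
            + Real.log ((xm / (1 - xm)) * ((1 - w₀) / w₀))
            - (1 - xm) / xm := funext hy
      rw [hyF]
      exact ((hcomp.add hinner).add_const _).sub_const _
    -- now identify the derivative value
    have h1w : (0:ℝ) < 1 + w := by linarith
    have hEval : Real.exp (y t) =
        Real.exp w * Real.exp s * ((xm / (1 - xm)) * ((1 - w₀) / w₀)) / Real.exp b := by
      rw [hy t, Real.exp_sub, Real.exp_add, Real.exp_add, Real.exp_log argpos]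
    have hzs : g t * Real.exp s = (1 - xm) / xm * Real.exp b := by
      simp only [hg, hb]
      rw [hs]
      field_simp
    have key : w₀ * Real.exp (y t) * w = 1 - w₀ := by
      rw [hEval]
      have expand : w₀ * (Real.exp w * Real.exp s * ((xm / (1 - xm)) * ((1 - w₀) / w₀)) /
          Real.exp b) * w =
          (w * Real.exp w * Real.exp s) *
            (w₀ * ((xm / (1 - xm)) * ((1 - w₀) / w₀)) / Real.exp b) := by ring
      rw [expand, hWe, hzs]
      field_simp
    have hPsi : Ψ (y t) = (1 + w)⁻¹ := by
      rw [hΨ]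
      have hEpos : 0 < w₀ * Real.exp (y t) := mul_pos hw0 (Real.exp_pos _)
      rw [← key]
      rw [show w₀ * Real.exp (y t) + w₀ * Real.exp (y t) * w
          = w₀ * Real.exp (y t) * (1 + w) by ring]
      exact div_mul_cancel_left₀ (ne_of_gt hEpos) _
    have hval : (Real.exp w + w * Real.exp w)⁻¹ * (-(lam ^ 2) * g t) + lam ^ 2
        = lam ^ 2 * Ψ (y t) := by
      rw [hPsi, ← hWe]
      have hene : Real.exp w ≠ 0 := Real.exp_ne_zero w
      field_simp
      ring
    rw [← hval]
    exact hF
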